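/- arXiv:1403.4330 — 2 statements merged into one kernel-verified Lean document; each statement's English description precedes it below -/
import Mathlib

section
/- Let K_i ∈ ℝ^{(m_i+…+m_N)×n} and L_i ∈ ℝ^{n×(p_1+…+p_i)} (i = 1,…,N) be arbitrary gains. Then the controller transfer function is lower block triangular: for every s ∈ ℂ not in the spectrum of A_K, and for all block indices i < j (i-th block of size m_i in the m-partition of rows, j-th block of size p_j in the p-partition of columns), the (i,j) block of the m×p complex matrix C_K (sI_{nN} − A_K)^{-1} B_K is zero. -/
open Matrix

namespace TriLQG

noncomputable section

variable {N : ℕ}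

/-- Index type of an `(N+1)`-block partitioned coordinate space with block sizes `d`. -/
abbrev Idx {N : ℕ} (d : Fin (N+1) → ℕ) : Type := Σ k : Fin (N+1), Fin (d k)

/-- Indices belonging to blocks `i, i+1, …, N`. -/
abbrev IdxGe {N : ℕ} (d : Fin (N+1) → ℕ) (i : Fin (N+1)) : Type := {x : Idx d // i ≤ x.1}

/-- Indices belonging to blocks `0, 1, …, i`. -/
abbrev IdxLe {N : ℕ} (d : Fin (N+1) → ℕ) (i : Fin (N+1)) : Type := {x : Idx d // x.1 ≤ i}

/-- The selector matrix `E^{↓i}` (columns of the identity for blocks `i,…,N`). -/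
def padGe (d : Fin (N+1) → ℕ) (i : Fin (N+1)) : Matrix (Idx d) (IdxGe d i) ℝ :=
  Matrix.of fun r c => if r = (c : Idx d) then 1 else 0

/-- The selector matrix `E^{↑i}` (columns of the identity for blocks `0,…,i`). -/
def padLe (d : Fin (N+1) → ℕ) (i : Fin (N+1)) : Matrix (Idx d) (IdxLe d i) ℝ :=
  Matrix.of fun r c => if r = (c : Idx d) then 1 else 0

/-- Complexification of a real matrix. -/
def mc {α β : Type*} (M : Matrix α β ℝ) : Matrix α β ℂ := M.map Complex.ofReal

/-- A real square matrix is Hurwitz if its (complex) spectrum lies in the open left half plane. -/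
def IsHurwitz {t : Type*} [Fintype t] [DecidableEq t] (M : Matrix t t ℝ) : Prop :=
  ∀ z ∈ spectrum ℂ (mc M), z.re < 0

open Classical in
/-- The (unique, symmetric, positive semidefinite) square root of a positive semidefinite
real matrix; junk value `0` if the matrix is not positive semidefinite. -/
def msqrt {t : Type*} [Fintype t] [DecidableEq t] (M : Matrix t t ℝ) : Matrix t t ℝ :=
  if h : M.PosSemidef then
    (h.1.eigenvectorUnitary : Matrix t t ℝ) * diagonal ((↑) ∘ (√·) ∘ h.1.eigenvalues) *
      (star h.1.eigenvectorUnitary : Matrix t t ℝ)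
  else 0

/-- Full column rank. -/
def FullColRank {α β : Type*} [Fintype β] {R : Type*} [CommRing R] (M : Matrix α β R) : Prop :=
  M.rank = Fintype.card β

/-- Full row rank. -/
def FullRowRank {α β : Type*} [Fintype α] [Fintype β] {R : Type*} [CommRing R]
    (M : Matrix α β R) : Prop :=
  M.rank = Fintype.card α

/-- `ARE_p(Ã,B̃,F̃,H̃)` together with its gain: `X` is a symmetric solution of the
control algebraic Riccati equation and `K` is the associated gain. -/
def AREp {n' m' q' : Type*} [Fintype n'] [Fintype m'] [Fintype q'] [DecidableEq m']
    (At : Matrix n' n' ℝ) (Bt : Matrix n' m' ℝ) (Ft : Matrix q' n' ℝ) (Ht : Matrix q' m' ℝ)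
    (X : Matrix n' n' ℝ) (K : Matrix m' n' ℝ) : Prop :=
  X.IsSymm ∧
  Atᵀ * X + X * At - (X * Bt + Ftᵀ * Ht) * (Htᵀ * Ht)⁻¹ * (X * Bt + Ftᵀ * Ht)ᵀ + Ftᵀ * Ft = 0 ∧
  K = -((Htᵀ * Ht)⁻¹ * (X * Bt + Ftᵀ * Ht)ᵀ)

/-- `ARE_d(Ã,C̃,W̃,Ṽ)` together with its gain. -/
def AREd {n' p' r' : Type*} [Fintype n'] [Fintype p'] [Fintype r'] [DecidableEq p']
    (At : Matrix n' n' ℝ) (Ct : Matrix p' n' ℝ) (Wt : Matrix n' r' ℝ) (Vt : Matrix p' r' ℝ)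
    (Y : Matrix n' n' ℝ) (L : Matrix n' p' ℝ) : Prop :=
  Y.IsSymm ∧
  At * Y + Y * Atᵀ - (Ct * Y + Vt * Wtᵀ)ᵀ * (Vt * Vtᵀ)⁻¹ * (Ct * Y + Vt * Wtᵀ) + Wt * Wtᵀ = 0 ∧
  L = -((Ct * Y + Vt * Wtᵀ)ᵀ * (Vt * Vtᵀ)⁻¹)

/-- Lower block triangular sparsity. -/
def IsLBT {N : ℕ} {d e : Fin (N+1) → ℕ} (M : Matrix (Idx d) (Idx e) ℝ) : Prop :=
  ∀ a : Idx d, ∀ b : Idx e, a.1 < b.1 → M a b = 0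

/-- The data of the `(N+1)`-player triangular plant. -/
structure Plant (N : ℕ) where
  nd : Fin (N+1) → ℕ
  md : Fin (N+1) → ℕ
  pd : Fin (N+1) → ℕ
  q : ℕ
  r : ℕ
  A : Matrix (Idx nd) (Idx nd) ℝ
  B : Matrix (Idx nd) (Idx md) ℝ
  C : Matrix (Idx pd) (Idx nd) ℝ
  F : Matrix (Fin q) (Idx nd) ℝ
  H : Matrix (Fin q) (Idx md) ℝ
  W : Matrix (Idx nd) (Fin r) ℝ
  V : Matrix (Idx pd) (Fin r) ℝ

variable (P : Plant N)

/-- family of controller gains `K_i ∈ ℝ^{(m_i+⋯+m_N)×n}` -/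
abbrev KGains (P : Plant N) : Type := (i : Fin (N+1)) → Matrix (IdxGe P.md i) (Idx P.nd) ℝ

/-- family of observer gains `L_i ∈ ℝ^{n×(p_1+⋯+p_i)}` -/
abbrev LGains (P : Plant N) : Type := (i : Fin (N+1)) → Matrix (Idx P.nd) (IdxLe P.pd i) ℝ

/-- family of symmetric matrices `X_i` (or `Y_i`) -/
abbrev SFam (P : Plant N) : Type := Fin (N+1) → Matrix (Idx P.nd) (Idx P.nd) ℝ

def Bdown (i : Fin (N+1)) : Matrix (Idx P.nd) (IdxGe P.md i) ℝ := P.B.submatrix id Subtype.val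
def Hdown (i : Fin (N+1)) : Matrix (Fin P.q) (IdxGe P.md i) ℝ := P.H.submatrix id Subtype.val
def Cup (i : Fin (N+1)) : Matrix (IdxLe P.pd i) (Idx P.nd) ℝ := P.C.submatrix Subtype.val id
def Vup (i : Fin (N+1)) : Matrix (IdxLe P.pd i) (Fin P.r) ℝ := P.V.submatrix Subtype.val id

/-- `Ψ_{↓i}^{↓i} = (H^{↓i})ᵀ H^{↓i}` -/
def Psidd (i : Fin (N+1)) : Matrix (IdxGe P.md i) (IdxGe P.md i) ℝ := (Hdown P i)ᵀ * Hdown P i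

/-- `Φ_{↑j}^{↑j} = V_{↑j} (V_{↑j})ᵀ` -/
def Phiuu (j : Fin (N+1)) : Matrix (IdxLe P.pd j) (IdxLe P.pd j) ℝ := Vup P j * (Vup P j)ᵀ

/-- The coupled Riccati system (2a)–(2d) of the paper. -/
def Coupled (X : SFam P) (K : KGains P) (Y : SFam P) (L : LGains P) : Prop :=
  AREp P.A (Bdown P 0) P.F (Hdown P 0) (X 0) (K 0) ∧
  (∀ t : Fin N,
    AREp (P.A + L t.castSucc * Cup P t.castSucc) (Bdown P t.succ)
      (-(Hdown P t.castSucc * K t.castSucc)) (Hdown P t.succ) (X t.succ) (K t.succ)) ∧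
  AREd P.A (Cup P (Fin.last N)) P.W (Vup P (Fin.last N)) (Y (Fin.last N)) (L (Fin.last N)) ∧
  (∀ t : Fin N,
    AREd (P.A + Bdown P t.succ * K t.succ) (Cup P t.castSucc)
      (-(L t.succ * Vup P t.succ)) (Vup P t.castSucc) (Y t.castSucc) (L t.castSucc))

/-- `A^{KL}_{k+1,k}` for `k = 0, 1, …, N+1` (`k = 0` gives `A+BK_1`,
`k = N+1` gives `A+L_N C`). -/
def AKL (K : KGains P) (L : LGains P) (k : Fin (N+2)) : Matrix (Idx P.nd) (Idx P.nd) ℝ :=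
  if hk : k.1 < N + 1 then
    (if k.1 = 0 then P.A + Bdown P 0 * K 0
     else
       have h1 : k.1 - 1 < N + 1 := by omega
       P.A + Bdown P ⟨k.1, hk⟩ * K ⟨k.1, hk⟩ +
         L ⟨k.1 - 1, h1⟩ * Cup P ⟨k.1 - 1, h1⟩)
  else P.A + L (Fin.last N) * Cup P (Fin.last N)

/-- index set of the `n(N+1)`-dimensional controller state space -/
abbrev CtrIx {N : ℕ} (nd : Fin (N+1) → ℕ) : Type := Fin (N+1) × Idx nd

/-- index set of the `n(N+2)`-dimensional closed-loop state space:
`N+1` controller blocks and one plant block -/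
abbrev BigIx {N : ℕ} (nd : Fin (N+1) → ℕ) : Type := CtrIx nd ⊕ Idx nd

/-- the incidence matrix `ζ` -/
def zetaN (nd : Fin (N+1) → ℕ) : Matrix (CtrIx nd) (CtrIx nd) ℝ :=
  Matrix.of fun x y => if y.1 ≤ x.1 ∧ x.2 = y.2 then 1 else 0

/-- block diagonal matrix -/
def blkDiagN {nd : Fin (N+1) → ℕ} (f : Fin (N+1) → Matrix (Idx nd) (Idx nd) ℝ) :
    Matrix (CtrIx nd) (CtrIx nd) ℝ :=
  Matrix.of fun x y => if x.1 = y.1 then f x.1 x.2 y.2 else 0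

/-- `A_K` of the optimal controller realization -/
def AK (K : KGains P) (L : LGains P) : Matrix (CtrIx P.nd) (CtrIx P.nd) ℝ :=
  blkDiagN (fun _ => P.A) + blkDiagN (fun k => L k * Cup P k) +
    zetaN P.nd * blkDiagN (fun k => Bdown P k * K k) * (zetaN P.nd)⁻¹

/-- `B_K` of the optimal controller realization -/
def BK (L : LGains P) : Matrix (CtrIx P.nd) (Idx P.pd) ℝ :=
  Matrix.of fun x c => -((L x.1 * (padLe P.pd x.1)ᵀ) x.2 c)

/-- `C_K` of the optimal controller realization -/
def CK (K : KGains P) : Matrix (Idx P.md) (CtrIx P.nd) ℝ :=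
  (Matrix.of fun rr (x : CtrIx P.nd) => (padGe P.md x.1 * K x.1) rr x.2) * (zetaN P.nd)⁻¹

/-- closed-loop `𝒜` -/
def Acal (K : KGains P) (L : LGains P) : Matrix (BigIx P.nd) (BigIx P.nd) ℝ :=
  Matrix.fromBlocks (AK P K L) (BK P L * P.C) (P.B * CK P K) P.A

/-- closed-loop `ℬ` -/
def Bcal : Matrix (BigIx P.nd) (Idx P.md) ℝ :=
  Matrix.of fun x j => Sum.elim (fun _ => (0:ℝ)) (fun a => P.B a j) x

/-- closed-loop `𝒲` -/
def Wcal (L : LGains P) : Matrix (BigIx P.nd) (Fin P.r) ℝ :=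
  Matrix.of fun x j => Sum.elim (fun y => (BK P L * P.V) y j) (fun a => P.W a j) x

/-- closed-loop `ℱ` -/
def Fcal (K : KGains P) : Matrix (Fin P.q) (BigIx P.nd) ℝ :=
  Matrix.of fun i x => Sum.elim (fun y => (P.H * CK P K) i y) (fun a => P.F i a) x

/-- closed-loop `𝒞` -/
def Ccal : Matrix (Idx P.pd) (BigIx P.nd) ℝ :=
  Matrix.of fun i x => Sum.elim (fun _ => (0:ℝ)) (fun a => P.C i a) x

/-- block index of a closed-loop index -/
def blkOf {nd : Fin (N+1) → ℕ} (x : BigIx nd) : Fin (N+2) :=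
  Sum.elim (fun y => y.1.castSucc) (fun _ => Fin.last (N+1)) x

/-- within-block state of a closed-loop index -/
def stOf {nd : Fin (N+1) → ℕ} (x : BigIx nd) : Idx nd :=
  Sum.elim Prod.snd id x

/-- the incidence matrix `ζ̄` of the `(N+2)`-fold block structure -/
def zetaBar (nd : Fin (N+1) → ℕ) : Matrix (BigIx nd) (BigIx nd) ℝ :=
  Matrix.of fun x y => if blkOf y ≤ blkOf x ∧ stOf x = stOf y then 1 else 0

/-- embedding of a within-block index into the closed-loop index set, at block `k` -/
def emb {nd : Fin (N+1) → ℕ} (k : Fin (N+2)) (a : Idx nd) : BigIx nd :=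
  if h : k.1 < N + 1 then Sum.inl (⟨⟨k.1, h⟩, a⟩ : CtrIx nd) else Sum.inr a

/-- `𝒦_i` of the paper (eq. (9)). -/
def Kcal (K : KGains P) (i : Fin (N+1)) : Matrix (IdxGe P.md i) (BigIx P.nd) ℝ :=
  (padGe P.md i)ᵀ *
    Matrix.of fun (rr : Idx P.md) (x : BigIx P.nd) =>
      Sum.elim
        (fun y : CtrIx P.nd =>
          if hl : y.1.1 < N then
            (if y.1 < i then (0:ℝ)
             else
               have h1 : y.1.1 + 1 < N + 1 := by omega
               (padGe P.md ⟨y.1.1 + 1, h1⟩ * K ⟨y.1.1 + 1, h1⟩ -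
                   padGe P.md y.1 * K y.1) rr y.2)
          else (-(padGe P.md (Fin.last N) * K (Fin.last N))) rr y.2)
        (fun a => (padGe P.md i * K i) rr a) x

/-- `ℒ_j` of the paper (eq. (10)). -/
def Lcal (L : LGains P) (j : Fin (N+1)) : Matrix (BigIx P.nd) (IdxLe P.pd j) ℝ :=
  Matrix.of fun x c =>
    Sum.elim
      (fun y : CtrIx P.nd =>
        if y.1 < j then (L y.1 * (padLe P.pd y.1)ᵀ * padLe P.pd j) y.2 c else (L j) y.2 c)
      (fun a => (L j) a c) x

/-- `J̃_i` of the paper (eq. (11)). -/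
def Jtil (nd : Fin (N+1) → ℕ) (i : Fin (N+1)) : Matrix (Idx nd) (BigIx nd) ℝ :=
  Matrix.of fun a x =>
    Sum.elim
      (fun y : CtrIx nd => if 0 < i.1 ∧ y.1.1 = i.1 - 1 ∧ a = y.2 then (1:ℝ) else 0)
      (fun b => if a = b then (-1:ℝ) else 0) x

/-- `Ĵ_j` of the paper (eq. (11)). -/
def Jhat (nd : Fin (N+1) → ℕ) (j : Fin (N+1)) : Matrix (BigIx nd) (Idx nd) ℝ :=
  Matrix.of fun x a =>
    Sum.elim
      (fun y : CtrIx nd => if j < y.1 ∧ y.2 = a then (1:ℝ) else 0)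
      (fun b => if b = a then (1:ℝ) else 0) x

/-- `Γ_i = −(Ψ_{↓i}^{↓i})^{1/2} 𝒦_i` for `i ≥ 1` (Lemma 2 of the paper). -/
def Gam (K : KGains P) (i : Fin (N+1)) : Matrix (IdxGe P.md i) (BigIx P.nd) ℝ :=
  -(msqrt (Psidd P i) * Kcal P K i)

/-- `Λ_j = −ℒ_j (Φ_{↑j}^{↑j})^{1/2}` for `j ≤ N` (Lemma 2 of the paper). -/
def Lam (L : LGains P) (j : Fin (N+1)) : Matrix (BigIx P.nd) (IdxLe P.pd j) ℝ :=
  -(Lcal P L j * msqrt (Phiuu P j))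

/-- the inner factor `U_1(s)` -/
def Uone (K : KGains P) (L : LGains P) (s : ℂ) : Matrix (Fin P.q) (IdxGe P.md 0) ℂ :=
  mc (P.F + Hdown P 0 * K 0) * (s • 1 - mc (AKL P K L 0))⁻¹ * mc (Bdown P 0) *
      (mc (msqrt (Psidd P 0)))⁻¹ +
    mc (Hdown P 0) * (mc (msqrt (Psidd P 0)))⁻¹

/-- the inner factor `U_{t+2}(s)` (paper indexing), mapping block level `t+1` to `t` -/
def Usucc (K : KGains P) (L : LGains P) (t : Fin N) (s : ℂ) :
    Matrix (IdxGe P.md t.castSucc) (IdxGe P.md t.succ) ℂ :=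
  mc (msqrt (Psidd P t.castSucc)) *
      mc ((padGe P.md t.castSucc)ᵀ *
        (padGe P.md t.succ * K t.succ - padGe P.md t.castSucc * K t.castSucc)) *
      (s • 1 - mc (AKL P K L t.succ.castSucc))⁻¹ * mc (Bdown P t.succ) *
      (mc (msqrt (Psidd P t.succ)))⁻¹ +
    mc (msqrt (Psidd P t.castSucc)) * mc ((padGe P.md t.castSucc)ᵀ * padGe P.md t.succ) *
      (mc (msqrt (Psidd P t.succ)))⁻¹

/-- the co-inner factor `V_{N+1}(s)` (paper indexing: the last one) -/
def Vlast (K : KGains P) (L : LGains P) (s : ℂ) :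
    Matrix (IdxLe P.pd (Fin.last N)) (Fin P.r) ℂ :=
  (mc (msqrt (Phiuu P (Fin.last N))))⁻¹ * mc (Cup P (Fin.last N)) *
      (s • 1 - mc (AKL P K L (Fin.last (N+1))))⁻¹ *
      mc (P.W + L (Fin.last N) * Vup P (Fin.last N)) +
    (mc (msqrt (Phiuu P (Fin.last N))))⁻¹ * mc (Vup P (Fin.last N))

/-- the co-inner factor `V_{t+1}(s)` (paper indexing), for `t+1 ≤ N` -/
def Vmid (K : KGains P) (L : LGains P) (t : Fin N) (s : ℂ) :
    Matrix (IdxLe P.pd t.castSucc) (IdxLe P.pd t.succ) ℂ :=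
  (mc (msqrt (Phiuu P t.castSucc)))⁻¹ * mc (Cup P t.castSucc) *
      (s • 1 - mc (AKL P K L t.succ.castSucc))⁻¹ *
      mc ((L t.castSucc * (padLe P.pd t.castSucc)ᵀ - L t.succ * (padLe P.pd t.succ)ᵀ) *
        padLe P.pd t.succ * msqrt (Phiuu P t.succ)) +
    (mc (msqrt (Phiuu P t.castSucc)))⁻¹ *
      mc ((padLe P.pd t.castSucc)ᵀ * padLe P.pd t.succ * msqrt (Phiuu P t.succ))

/-- the product `U_1(s) U_2(s) ⋯ U_i(s)` -/
def Uprod (K : KGains P) (L : LGains P) (s : ℂ) :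
    (i : Fin (N+1)) → Matrix (Fin P.q) (IdxGe P.md i) ℂ :=
  Fin.induction (motive := fun i => Matrix (Fin P.q) (IdxGe P.md i) ℂ)
    (Uone P K L s) (fun t ih => ih * Usucc P K L t s)

/-- the product `V_j(s) V_{j+1}(s) ⋯ V_{N+1}(s)` -/
def Vprod (K : KGains P) (L : LGains P) (s : ℂ) :
    (j : Fin (N+1)) → Matrix (IdxLe P.pd j) (Fin P.r) ℂ :=
  Fin.reverseInduction (motive := fun j => Matrix (IdxLe P.pd j) (Fin P.r) ℂ)
    (Vlast P K L s) (fun t ih => Vmid P K L t s * ih)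

/-- closed-loop transfer function `G11(s) = ℱ(sI−𝒜)⁻¹𝒲` -/
def G11 (K : KGains P) (L : LGains P) (s : ℂ) : Matrix (Fin P.q) (Fin P.r) ℂ :=
  mc (Fcal P K) * (s • 1 - mc (Acal P K L))⁻¹ * mc (Wcal P L)

/-- closed-loop transfer function `G12(s) = ℱ(sI−𝒜)⁻¹ℬ + H` -/
def G12 (K : KGains P) (L : LGains P) (s : ℂ) : Matrix (Fin P.q) (Idx P.md) ℂ :=
  mc (Fcal P K) * (s • 1 - mc (Acal P K L))⁻¹ * mc (Bcal P) + mc P.H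

/-- closed-loop transfer function `G21(s) = 𝒞(sI−𝒜)⁻¹𝒲 + V` -/
def G21 (K : KGains P) (L : LGains P) (s : ℂ) : Matrix (Idx P.pd) (Fin P.r) ℂ :=
  mc (Ccal P) * (s • 1 - mc (Acal P K L))⁻¹ * mc (Wcal P L) + mc P.V

end

end TriLQG

namespace TriLQG

open OrderDual

/-- block function for the controller index partition (dual order: lower triangular) -/
abbrev cblk {N : ℕ} {nd : Fin (N+1) → ℕ} (x : CtrIx nd) : (Fin (N+1))ᵒᵈ := toDual x.1

lemma mc_bt {N : ℕ} {nd : Fin (N+1) → ℕ} {M : Matrix (CtrIx nd) (CtrIx nd) ℝ}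
    (h : M.BlockTriangular cblk) : (mc M).BlockTriangular cblk := by
  intro x y hxy
  simp [mc, h hxy]

lemma blkDiagN_bt {N : ℕ} {nd : Fin (N+1) → ℕ} (f : Fin (N+1) → Matrix (Idx nd) (Idx nd) ℝ) :
    (blkDiagN f).BlockTriangular cblk := by
  intro x y hxy
  have : x.1 ≠ y.1 := fun h => hxy.ne' (congrArg toDual h)
  simp [blkDiagN, this]

lemma zeta_bt {N : ℕ} (nd : Fin (N+1) → ℕ) : (zetaN nd).BlockTriangular cblk := by
  intro x y hxy
  have : ¬ y.1 ≤ x.1 := not_le.mpr (toDual_lt_toDual.mp hxy)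
  simp [zetaN, this]

lemma zeta_det {N : ℕ} (nd : Fin (N+1) → ℕ) : (zetaN nd).det = 1 := by
  rw [(zeta_bt nd).det]
  apply Finset.prod_eq_one
  intro k _
  have h1 : (zetaN nd).toSquareBlock cblk k = 1 := by
    ext x y
    have hx : x.1.1 = ofDual k := congrArg ofDual x.2
    have hy : y.1.1 = ofDual k := congrArg ofDual y.2
    have hxy1 : x.1.1 = y.1.1 := hx.trans hy.symm
    by_cases h : x.1.2 = y.1.2
    · have hxy : x = y := Subtype.ext (Prod.ext hxy1 h)
      simp [Matrix.toSquareBlock_def, zetaN, hxy1.symm.le, h, hxy, Matrix.one_apply]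
    · have hxy : x ≠ y := fun he => h (congrArg (fun z => z.1.2) he)
      simp [Matrix.toSquareBlock_def, zetaN, h, hxy, Matrix.one_apply]
  rw [h1, Matrix.det_one]

noncomputable instance zeta_inv_instance {N : ℕ} (nd : Fin (N+1) → ℕ) :
    Invertible (zetaN nd) :=
  Matrix.invertibleOfIsUnitDet _ (by rw [zeta_det]; exact isUnit_one)

lemma zetaInv_bt {N : ℕ} (nd : Fin (N+1) → ℕ) : (zetaN nd)⁻¹.BlockTriangular cblk :=
  Matrix.blockTriangular_inv_of_blockTriangular (zeta_bt nd)

lemma AK_bt {N : ℕ} (P : Plant N) (K : KGains P) (L : LGains P) :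
    (AK P K L).BlockTriangular cblk := by
  unfold AK
  exact ((blkDiagN_bt _).add (blkDiagN_bt _)).add
    (((zeta_bt P.nd).mul (blkDiagN_bt _)).mul (zetaInv_bt P.nd))

lemma CK_zero {N : ℕ} (P : Plant N) (K : KGains P) (rr : Idx P.md) (x : CtrIx P.nd)
    (h : rr.1 < x.1) : CK P K rr x = 0 := by
  rw [CK, Matrix.mul_apply]
  apply Finset.sum_eq_zero
  intro y _
  by_cases hy : rr.1 < y.1
  · have hR : (Matrix.of fun rr (x : CtrIx P.nd) => (padGe P.md x.1 * K x.1) rr x.2) rr y = 0 := by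
      simp only [Matrix.of_apply, Matrix.mul_apply]
      apply Finset.sum_eq_zero
      intro c _
      have : rr ≠ (c : Idx P.md) := by
        intro he
        exact absurd (he ▸ c.2) (not_le.mpr hy)
      simp [padGe, this]
    rw [hR, zero_mul]
  · have : (zetaN P.nd)⁻¹ y x = 0 := zetaInv_bt P.nd
      (toDual_lt_toDual.mpr (lt_of_le_of_lt (not_lt.mp hy) h))
    rw [this, mul_zero]

lemma BK_zero {N : ℕ} (P : Plant N) (L : LGains P) (x : CtrIx P.nd) (c : Idx P.pd)
    (h : x.1 < c.1) : BK P L x c = 0 := by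
  rw [BK]
  simp only [Matrix.of_apply, neg_eq_zero, Matrix.mul_apply]
  apply Finset.sum_eq_zero
  intro c' _
  have : c ≠ (c' : Idx P.pd) := by
    intro he
    exact absurd (he ▸ h) (not_lt.mpr c'.2)
  simp [Matrix.transpose_apply, padLe, this]

theorem stmt5' {N : ℕ} (P : Plant N)
    (K : KGains P) (L : LGains P)
    (s : ℂ) (hs : s ∉ spectrum ℂ (mc (AK P K L)))
    (i j : Fin (N+1)) (hij : i < j) (a : Fin (P.md i)) (b : Fin (P.pd j)) :
    (mc (CK P K) * (s • 1 - mc (AK P K L))⁻¹ * mc (BK P L)) ⟨i, a⟩ ⟨j, b⟩ = 0 := by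
  have hU : IsUnit (s • (1 : Matrix (CtrIx P.nd) (CtrIx P.nd) ℂ) - mc (AK P K L)) := by
    have := spectrum.notMem_iff.mp hs
    rwa [Algebra.algebraMap_eq_smul_one] at this
  haveI : Invertible (s • (1 : Matrix (CtrIx P.nd) (CtrIx P.nd) ℂ) - mc (AK P K L)) :=
    (Matrix.invertibleOfIsUnitDet _ ((Matrix.isUnit_iff_isUnit_det _).mp hU))
  have hMbt : (s • (1 : Matrix (CtrIx P.nd) (CtrIx P.nd) ℂ) - mc (AK P K L)).BlockTriangular
      cblk := by
    refine Matrix.BlockTriangular.sub ?_ (mc_bt (AK_bt P K L))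
    intro x y hxy
    simp [Matrix.blockTriangular_one hxy]
  have hInv := Matrix.blockTriangular_inv_of_blockTriangular hMbt
  rw [Matrix.mul_apply]
  apply Finset.sum_eq_zero
  intro y _
  rw [Matrix.mul_apply]
  by_cases hy : y.1 < j
  · have : mc (BK P L) y ⟨j, b⟩ = 0 := by
      simp [mc, BK_zero P L y ⟨j, b⟩ hy]
    rw [this, mul_zero]
  · have hjy : j ≤ y.1 := not_lt.mp hy
    have hz : ∀ x ∈ Finset.univ, mc (CK P K) ⟨i, a⟩ x *
        (s • (1 : Matrix (CtrIx P.nd) (CtrIx P.nd) ℂ) - mc (AK P K L))⁻¹ x y = 0 := by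
      intro x _
      by_cases hx : i < x.1
      · have : mc (CK P K) ⟨i, a⟩ x = 0 := by
          simp [mc, CK_zero P K ⟨i, a⟩ x hx]
        rw [this, zero_mul]
      · have hxy : x.1 < y.1 := lt_of_le_of_lt (not_lt.mp hx) (lt_of_lt_of_le hij hjy)
        have : (s • (1 : Matrix (CtrIx P.nd) (CtrIx P.nd) ℂ) - mc (AK P K L))⁻¹ x y = 0 :=
          hInv (toDual_lt_toDual.mpr hxy)
        rw [this, mul_zero]
    rw [Finset.sum_eq_zero hz, zero_mul]

end TriLQG


namespace TriLQG

/-- the controller transfer function `C_K (sI − A_K)⁻¹ B_K` is lower block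
triangular: its `(i,j)` block vanishes whenever `i < j`. -/
theorem stmt5 {N : ℕ} (P : Plant N)
    (hdim : ∀ k : Fin (N+1), 0 < P.nd k ∧ 0 < P.md k ∧ 0 < P.pd k)
    (K : KGains P) (L : LGains P)
    (s : ℂ) (hs : s ∉ spectrum ℂ (mc (AK P K L)))
    (i j : Fin (N+1)) (hij : i < j) (a : Fin (P.md i)) (b : Fin (P.pd j)) :
    (mc (CK P K) * (s • 1 - mc (AK P K L))⁻¹ * mc (BK P L)) ⟨i, a⟩ ⟨j, b⟩ = 0 := by
  exact stmt5' P K L s hs i j hij a b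

end TriLQG
end

section
/- Suppose (X_i, K_i)_{i=1}^N and (Y_i, L_i)_{i=1}^N satisfy the coupled Riccati system and V has full row rank. Then for every j ∈ {1,…,N}, the transfer function V_j is co-inner on the imaginary axis: for every ω ∈ ℝ such that iω is not in the spectrum of A^{KL}_{j+1,j}, V_j(iω) V_j(iω)ᴴ = I (the identity of size p_1+…+p_j), where ᴴ denotes conjugate transpose. -/
open Matrix

namespace TriLQG


noncomputable section Aux

open Matrix

section MC
variable {α β γ : Type*}

lemma mc_mul [Fintype β] (M : Matrix α β ℝ) (N' : Matrix β γ ℝ) :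
    mc (M * N') = mc M * mc N' := by
  ext i j
  simp [mc, Matrix.mul_apply]

lemma mc_add (M N' : Matrix α β ℝ) : mc (M + N') = mc M + mc N' := by
  ext i j; simp [mc]

lemma mc_zero : mc (0 : Matrix α β ℝ) = 0 := by ext i j; simp [mc]

lemma mc_conjTranspose (M : Matrix α β ℝ) : (mc M)ᴴ = mc Mᵀ := by
  ext i j; simp [mc, Matrix.conjTranspose_apply]

lemma mc_det [Fintype α] [DecidableEq α] (M : Matrix α α ℝ) :
    (mc M).det = (M.det : ℂ) := by
  rw [show mc M = Complex.ofRealHom.mapMatrix M from rfl, ← RingHom.map_det]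
  rfl

end MC

/-- The core algebraic co-innerness lemma. -/
lemma coinner {n' p' u : Type*} [Fintype n'] [Fintype p'] [Fintype u]
    [DecidableEq n'] [DecidableEq p']
    (Ac Yc : Matrix n' n' ℂ) (Cc : Matrix p' n' ℂ) (Bc : Matrix n' u ℂ)
    (Dc : Matrix p' u ℂ) (Sc : Matrix p' p' ℂ) (s : ℂ)
    (hY : Ycᴴ = Yc)
    (h1 : Ac * Yc + Yc * Acᴴ + Bc * Bcᴴ = 0)
    (h2 : Yc * Ccᴴ + Bc * Dcᴴ = 0)
    (h3 : Sc * (Dc * Dcᴴ) * Scᴴ = 1)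
    (hs : (starRingEnd ℂ) s = -s)
    (hinv : IsUnit (s • (1 : Matrix n' n' ℂ) - Ac)) :
    (Sc * Cc * (s • 1 - Ac)⁻¹ * Bc + Sc * Dc) *
      (Sc * Cc * (s • 1 - Ac)⁻¹ * Bc + Sc * Dc)ᴴ = 1 := by
  set T : Matrix n' n' ℂ := s • 1 - Ac with hT
  have hdT : IsUnit T.det := (Matrix.isUnit_iff_isUnit_det T).mp hinv
  have hRT : T⁻¹ * T = 1 := Matrix.nonsing_inv_mul T hdT
  have hTR : T * T⁻¹ = 1 := Matrix.mul_nonsing_inv T hdT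
  have hTRH : (T⁻¹)ᴴ * Tᴴ = 1 := by rw [← conjTranspose_mul, hTR, conjTranspose_one]
  have hTHR : Tᴴ * (T⁻¹)ᴴ = 1 := by rw [← conjTranspose_mul, hRT, conjTranspose_one]
  have h0 : T * Yc + Yc * Tᴴ = -(Ac * Yc + Yc * Acᴴ) := by
    rw [hT, conjTranspose_sub, conjTranspose_smul, conjTranspose_one, Complex.star_def, hs]
    simp only [Matrix.sub_mul, Matrix.mul_sub, Matrix.smul_mul, Matrix.mul_smul,
      Matrix.one_mul, Matrix.mul_one, Matrix.mul_neg, Matrix.neg_mul, neg_smul]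
    abel
  have hBB0 : Bc * Bcᴴ = -(Ac * Yc + Yc * Acᴴ) := by
    calc Bc * Bcᴴ = (Ac * Yc + Yc * Acᴴ + Bc * Bcᴴ) - (Ac * Yc + Yc * Acᴴ) := by abel
      _ = -(Ac * Yc + Yc * Acᴴ) := by rw [h1, zero_sub]
  have hBB : Bc * Bcᴴ = T * Yc + Yc * Tᴴ := by rw [hBB0, h0]
  have mid : T⁻¹ * (Bc * Bcᴴ) * (T⁻¹)ᴴ = Yc * (T⁻¹)ᴴ + T⁻¹ * Yc := by
    rw [hBB]
    calc T⁻¹ * (T * Yc + Yc * Tᴴ) * (T⁻¹)ᴴ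
        = (T⁻¹ * T) * (Yc * (T⁻¹)ᴴ) + (T⁻¹ * Yc) * (Tᴴ * (T⁻¹)ᴴ) := by
          simp only [Matrix.mul_add, Matrix.add_mul, Matrix.mul_assoc]
      _ = Yc * (T⁻¹)ᴴ + T⁻¹ * Yc := by
          rw [hRT, hTHR, Matrix.one_mul, Matrix.mul_one]
  have hBD : Bc * Dcᴴ = -(Yc * Ccᴴ) := by
    calc Bc * Dcᴴ = (Yc * Ccᴴ + Bc * Dcᴴ) - (Yc * Ccᴴ) := by abel
      _ = -(Yc * Ccᴴ) := by rw [h2, zero_sub]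
  have hDB : Dc * Bcᴴ = -(Cc * Yc) := by
    have h4 := congrArg Matrix.conjTranspose hBD
    simpa [conjTranspose_mul, hY] using h4
  calc (Sc * Cc * T⁻¹ * Bc + Sc * Dc) * (Sc * Cc * T⁻¹ * Bc + Sc * Dc)ᴴ
      = Sc * Cc * (T⁻¹ * (Bc * Bcᴴ) * (T⁻¹)ᴴ) * (Ccᴴ * Scᴴ)
        + Sc * Cc * (T⁻¹ * (Bc * Dcᴴ)) * Scᴴ
        + (Sc * ((Dc * Bcᴴ) * (T⁻¹)ᴴ) * (Ccᴴ * Scᴴ) + Sc * (Dc * Dcᴴ) * Scᴴ) := by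
        simp only [conjTranspose_add, conjTranspose_mul, Matrix.mul_add, Matrix.add_mul,
          Matrix.mul_assoc]
        abel
    _ = 1 := by
        rw [mid, hBD, hDB, h3]
        simp only [Matrix.mul_add, Matrix.add_mul, Matrix.mul_neg, Matrix.neg_mul,
          Matrix.mul_assoc]
        abel

section Msqrt
variable {t : Type*} [Fintype t] [DecidableEq t]

lemma msqrt_transpose (M : Matrix t t ℝ) : (msqrt M)ᵀ = msqrt M := by
  unfold msqrt
  split
  · rename_i h
    rw [← Matrix.conjTranspose_eq_transpose_of_trivial]
    simp [conjTranspose_mul, Matrix.mul_assoc, Matrix.star_eq_conjTranspose,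
      diagonal_conjTranspose]
  · exact Matrix.transpose_zero

lemma msqrt_mul_self {M : Matrix t t ℝ} (h : M.PosSemidef) :
    msqrt M * msqrt M = M := by
  unfold msqrt
  rw [dif_pos h]
  have key : ∀ (U Us D E : Matrix t t ℝ), Us * U = 1 → D * D = E →
      U * D * Us * (U * D * Us) = U * E * Us := by
    intro U Us D E h1 h2
    calc U * D * Us * (U * D * Us) = U * (D * (Us * U) * D) * Us := by
          simp only [Matrix.mul_assoc]
      _ = U * E * Us := by rw [h1, Matrix.mul_one, h2]
  rw [key _ _ _ _ (Unitary.coe_star_mul_self _) (diagonal_mul_diagonal _ _)]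
  conv_rhs => rw [h.1.spectral_theorem]
  rw [Unitary.conjStarAlgAut_apply]
  simp [Real.mul_self_sqrt, h.eigenvalues_nonneg, Function.comp_def]

lemma msqrt_det_isUnit {M : Matrix t t ℝ} (h : M.PosDef) :
    IsUnit (msqrt M).det := by
  have h2 : (msqrt M).det * (msqrt M).det = M.det := by
    rw [← Matrix.det_mul, msqrt_mul_self h.posSemidef]
  refine isUnit_iff_ne_zero.mpr fun hz => ?_
  have h5 := h.det_pos
  rw [hz, mul_zero] at h2
  rw [← h2] at h5
  exact lt_irrefl _ h5

/-- normalization identity used as `h3` in `coinner` -/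
lemma coinner_h3 {M : Matrix t t ℝ} (h : M.PosDef) :
    (mc (msqrt M))⁻¹ * mc M * ((mc (msqrt M))⁻¹)ᴴ = 1 := by
  have hd : IsUnit (mc (msqrt M)).det := by
    rw [mc_det]
    exact isUnit_iff_ne_zero.mpr (by
      simpa using (isUnit_iff_ne_zero.mp (msqrt_det_isUnit h)))
  have hH : ((mc (msqrt M))⁻¹)ᴴ = (mc (msqrt M))⁻¹ := by
    rw [Matrix.conjTranspose_nonsing_inv, mc_conjTranspose, msqrt_transpose]
  have hsq : mc (msqrt M) * mc (msqrt M) = mc M := by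
    rw [← mc_mul, msqrt_mul_self h.posSemidef]
  rw [hH, ← hsq, ← Matrix.mul_assoc, Matrix.nonsing_inv_mul _ hd, Matrix.one_mul,
    Matrix.mul_nonsing_inv _ hd]

end Msqrt

lemma isUnit_smul_one_sub_of_not_mem_spectrum {n' : Type*} [Fintype n'] [DecidableEq n']
    {A : Matrix n' n' ℂ} {z : ℂ} (h : z ∉ spectrum ℂ A) :
    IsUnit (z • (1 : Matrix n' n' ℂ) - A) := by
  rw [spectrum.notMem_iff] at h
  rwa [Algebra.algebraMap_eq_smul_one] at h

lemma conj_I_omega (ω : ℝ) :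
    (starRingEnd ℂ) (Complex.I * (ω : ℂ)) = -(Complex.I * (ω : ℂ)) := by
  rw [_root_.map_mul, Complex.conj_I, Complex.conj_ofReal]
  ring

/-- The closed-loop Lyapunov identities derived from `AREd`. -/
lemma AREd_facts {n' p' r' : Type*} [Fintype n'] [Fintype p'] [Fintype r'] [DecidableEq p']
    {At : Matrix n' n' ℝ} {Ct : Matrix p' n' ℝ} {Wt : Matrix n' r' ℝ} {Vt : Matrix p' r' ℝ}
    {Y : Matrix n' n' ℝ} {L : Matrix n' p' ℝ}
    (h : AREd At Ct Wt Vt Y L) (hd : IsUnit (Vt * Vtᵀ).det) :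
    Y * Ctᵀ + (Wt + L * Vt) * Vtᵀ = 0 ∧
    (At + L * Ct) * Y + Y * (At + L * Ct)ᵀ + (Wt + L * Vt) * (Wt + L * Vt)ᵀ = 0 := by
  obtain ⟨hsym, hric, hLdef⟩ := h
  have hMT : (Ct * Y + Vt * Wtᵀ)ᵀ = Y * Ctᵀ + Wt * Vtᵀ := by
    rw [Matrix.transpose_add, Matrix.transpose_mul, Matrix.transpose_mul,
      Matrix.transpose_transpose, hsym]
  have hLPhi : L * (Vt * Vtᵀ) = -(Ct * Y + Vt * Wtᵀ)ᵀ := by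
    rw [hLdef]
    rw [Matrix.neg_mul, Matrix.mul_assoc, Matrix.nonsing_inv_mul _ hd, Matrix.mul_one]
  have part1 : Y * Ctᵀ + (Wt + L * Vt) * Vtᵀ = 0 := by
    calc Y * Ctᵀ + (Wt + L * Vt) * Vtᵀ
        = (Y * Ctᵀ + Wt * Vtᵀ) + L * (Vt * Vtᵀ) := by
          simp only [Matrix.add_mul, Matrix.mul_assoc]; abel
      _ = (Ct * Y + Vt * Wtᵀ)ᵀ + -(Ct * Y + Vt * Wtᵀ)ᵀ := by rw [hLPhi, hMT]
      _ = 0 := by abel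
  refine ⟨part1, ?_⟩
  have hWV : (Wt + L * Vt) * Vtᵀ = -(Y * Ctᵀ) := by
    calc (Wt + L * Vt) * Vtᵀ
        = (Y * Ctᵀ + (Wt + L * Vt) * Vtᵀ) - Y * Ctᵀ := by abel
      _ = -(Y * Ctᵀ) := by rw [part1, zero_sub]
  have hric' : At * Y + Y * Atᵀ + Wt * Wtᵀ
      = (Ct * Y + Vt * Wtᵀ)ᵀ * ((Vt * Vtᵀ)⁻¹ * (Ct * Y + Vt * Wtᵀ)) := by
    calc At * Y + Y * Atᵀ + Wt * Wtᵀ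
        = (At * Y + Y * Atᵀ -
            (Ct * Y + Vt * Wtᵀ)ᵀ * (Vt * Vtᵀ)⁻¹ * (Ct * Y + Vt * Wtᵀ) + Wt * Wtᵀ)
          + (Ct * Y + Vt * Wtᵀ)ᵀ * (Vt * Vtᵀ)⁻¹ * (Ct * Y + Vt * Wtᵀ) := by abel
      _ = (Ct * Y + Vt * Wtᵀ)ᵀ * ((Vt * Vtᵀ)⁻¹ * (Ct * Y + Vt * Wtᵀ)) := by
          rw [hric, zero_add, Matrix.mul_assoc]
  have hLM : L * (Ct * Y + Vt * Wtᵀ)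
      = -((Ct * Y + Vt * Wtᵀ)ᵀ * ((Vt * Vtᵀ)⁻¹ * (Ct * Y + Vt * Wtᵀ))) := by
    rw [hLdef]
    simp only [Matrix.neg_mul, Matrix.mul_assoc]
  calc (At + L * Ct) * Y + Y * (At + L * Ct)ᵀ + (Wt + L * Vt) * (Wt + L * Vt)ᵀ
      = (At * Y + Y * Atᵀ + Wt * Wtᵀ) + L * (Ct * Y + Vt * Wtᵀ)
        + (Y * (Ctᵀ * Lᵀ) + ((Wt + L * Vt) * Vtᵀ) * Lᵀ) := by
        simp only [Matrix.transpose_add, Matrix.transpose_mul, Matrix.add_mul,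
          Matrix.mul_add, Matrix.mul_assoc]
        abel
    _ = ((Ct * Y + Vt * Wtᵀ)ᵀ * ((Vt * Vtᵀ)⁻¹ * (Ct * Y + Vt * Wtᵀ))
          + -((Ct * Y + Vt * Wtᵀ)ᵀ * ((Vt * Vtᵀ)⁻¹ * (Ct * Y + Vt * Wtᵀ))))
        + (Y * (Ctᵀ * Lᵀ) + (-(Y * Ctᵀ)) * Lᵀ) := by
        rw [hric', hLM, hWV]
    _ = 0 := by
        simp only [Matrix.neg_mul, Matrix.mul_assoc]
        abel

section Selectors
variable {N : ℕ} {d : Fin (N+1) → ℕ}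

lemma padLe_proj_apply (j : Fin (N+1)) (r r' : Idx d) :
    (padLe d j * (padLe d j)ᵀ) r r' = if r = r' ∧ r.1 ≤ j then 1 else 0 := by
  rw [Matrix.mul_apply]
  simp only [padLe, Matrix.transpose_apply, Matrix.of_apply]
  by_cases hr : r.1 ≤ j
  · rw [Fintype.sum_eq_single (⟨r, hr⟩ : IdxLe d j)]
    · by_cases hrr : r = r'
      · subst hrr; simp [hr]
      · rw [if_pos rfl, one_mul, if_neg (fun h : r' = r => hrr h.symm),
          if_neg (fun h => hrr h.1)]
    · intro c hc
      rw [if_neg (fun h : r = (c : Idx d) => hc (Subtype.ext h.symm)), zero_mul]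
  · rw [if_neg (fun h => hr h.2)]
    apply Finset.sum_eq_zero
    intro c _
    rw [if_neg (fun h : r = (c : Idx d) => hr (h ▸ c.2)), zero_mul]

lemma padLe_absorb {i j : Fin (N+1)} (hij : i ≤ j) :
    (padLe d i)ᵀ * (padLe d j * (padLe d j)ᵀ) = (padLe d i)ᵀ := by
  ext c r
  rw [Matrix.mul_apply]
  have hproj : ∀ b : Idx d,
      (padLe d j * (padLe d j)ᵀ) b r = if b = r ∧ b.1 ≤ j then 1 else 0 :=
    fun b => padLe_proj_apply j b r
  simp only [hproj, Matrix.transpose_apply]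
  simp only [padLe, Matrix.of_apply]
  rw [Fintype.sum_eq_single ((c : Idx d))]
  · have hc : ((c : Idx d)).1 ≤ j := le_trans c.2 hij
    by_cases hrr : (c : Idx d) = r
    · rw [if_pos rfl, one_mul, if_pos ⟨hrr, hc⟩, if_pos hrr.symm]
    · rw [if_pos rfl, one_mul, if_neg (fun h => hrr h.1),
        if_neg (fun h : r = (c : Idx d) => hrr h.symm)]
  · intro b hb
    rw [if_neg (fun h : b = (c : Idx d) => hb h), zero_mul]

end Selectors

variable {N : ℕ}

lemma Vup_eq (P : Plant N) (j : Fin (N+1)) :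
    Vup P j = (padLe P.pd j)ᵀ * P.V := by
  ext c k
  rw [Matrix.mul_apply]
  simp only [Vup, Matrix.submatrix_apply, id_eq, Matrix.transpose_apply, padLe,
    Matrix.of_apply]
  rw [Fintype.sum_eq_single ((c : Idx P.pd))]
  · simp
  · intro b hb
    rw [if_neg (fun h : b = (c : Idx P.pd) => hb h), zero_mul]

lemma phiuu_posDef (P : Plant N) (hV : FullRowRank P.V) (j : Fin (N+1)) :
    (Phiuu P j).PosDef := by
  classical
  have hli : LinearIndependent ℝ (fun i : Idx P.pd => P.V i) := by
    rw [linearIndependent_iff_card_eq_finrank_span]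
    unfold FullRowRank at hV
    rw [← hV]
    exact P.V.rank_eq_finrank_span_row
  have hli2 : LinearIndependent ℝ (fun i : IdxLe P.pd j => P.V (i : Idx P.pd)) :=
    hli.comp Subtype.val Subtype.val_injective
  have hinj : Function.Injective (Vup P j).vecMul := by
    rw [Matrix.vecMul_injective_iff]
    exact hli2
  have hpd := Matrix.PosDef.mul_conjTranspose_self (Vup P j) hinj
  rwa [Matrix.conjTranspose_eq_transpose_of_trivial] at hpd

lemma AKL_last (P : Plant N) (K : KGains P) (L : LGains P) :
    AKL P K L (Fin.last (N+1)) = P.A + L (Fin.last N) * Cup P (Fin.last N) := by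
  rw [AKL, dif_neg (by simp [Fin.last])]

lemma AKL_mid (P : Plant N) (K : KGains P) (L : LGains P) (t : Fin N) :
    AKL P K L t.succ.castSucc
      = P.A + Bdown P t.succ * K t.succ + L t.castSucc * Cup P t.castSucc := by
  have h1 : (t.succ.castSucc : Fin (N+2)).1 < N + 1 := by
    simp only [Fin.coe_castSucc, Fin.val_succ]
    omega
  have h2 : ¬ ((t.succ.castSucc : Fin (N+2)).1 = 0) := by
    simp only [Fin.coe_castSucc, Fin.val_succ]
    omega
  rw [AKL, dif_pos h1, if_neg h2]
  congr 2

end Aux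

/-- each factor `V_j` is co-inner on the imaginary axis:
`V_j(iω) V_j(iω)ᴴ = I` whenever `iω` is not in the spectrum of `A^{KL}_{j+1,j}`.
The first conjunct handles `j ≤ N−1`, the second is the case `j = N` (`V_N`). -/
theorem stmt7 {N : ℕ} (P : Plant N)
    (hdim : ∀ k : Fin (N+1), 0 < P.nd k ∧ 0 < P.md k ∧ 0 < P.pd k)
    (hA : IsLBT P.A) (hB : IsLBT P.B) (hC : IsLBT P.C)
    (hV : FullRowRank P.V)
    (X Y : SFam P) (K : KGains P) (L : LGains P)
    (hcoup : Coupled P X K Y L) :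
    (∀ t : Fin N, ∀ ω : ℝ,
      (Complex.I * (ω : ℂ)) ∉ spectrum ℂ (mc (AKL P K L t.succ.castSucc)) →
      Vmid P K L t (Complex.I * (ω : ℂ)) * (Vmid P K L t (Complex.I * (ω : ℂ)))ᴴ = 1) ∧
    (∀ ω : ℝ, (Complex.I * (ω : ℂ)) ∉ spectrum ℂ (mc (AKL P K L (Fin.last (N+1)))) →
      Vlast P K L (Complex.I * (ω : ℂ)) * (Vlast P K L (Complex.I * (ω : ℂ)))ᴴ = 1) := by
  classical
  obtain ⟨hc1, hc2, hc3, hc4⟩ := hcoup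
  constructor
  · -- the middle factors
    intro t ω hω
    have hΦc : (Phiuu P t.castSucc).PosDef := phiuu_posDef P hV t.castSucc
    have hΦs : (Phiuu P t.succ).PosDef := phiuu_posDef P hV t.succ
    have hdet : IsUnit (Vup P t.castSucc * (Vup P t.castSucc)ᵀ).det :=
      isUnit_iff_ne_zero.mpr hΦc.det_pos.ne'
    obtain ⟨part1, part2⟩ := AREd_facts (hc4 t) hdet
    have hij : (t.castSucc : Fin (N+1)) ≤ t.succ := by
      rw [Fin.le_def]
      simp
    have habs_c : (padLe P.pd t.castSucc)ᵀ * (padLe P.pd t.succ * (padLe P.pd t.succ)ᵀ) = (padLe P.pd t.castSucc)ᵀ := padLe_absorb hij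
    have habs_s : (padLe P.pd t.succ)ᵀ * (padLe P.pd t.succ * (padLe P.pd t.succ)ᵀ) = (padLe P.pd t.succ)ᵀ :=
      padLe_absorb (le_refl (t.succ : Fin (N+1)))
    have hGE : (L t.castSucc * (padLe P.pd t.castSucc)ᵀ - L t.succ * (padLe P.pd t.succ)ᵀ) * (padLe P.pd t.succ * (padLe P.pd t.succ)ᵀ) = (L t.castSucc * (padLe P.pd t.castSucc)ᵀ - L t.succ * (padLe P.pd t.succ)ᵀ) := by
      rw [Matrix.sub_mul, Matrix.mul_assoc, habs_c, Matrix.mul_assoc, habs_s]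
    have hGEa : ∀ {k : Type} [Fintype k] (Z : Matrix (Idx P.pd) k ℝ),
        (L t.castSucc * (padLe P.pd t.castSucc)ᵀ - L t.succ * (padLe P.pd t.succ)ᵀ) * (padLe P.pd t.succ * ((padLe P.pd t.succ)ᵀ * Z)) = (L t.castSucc * (padLe P.pd t.castSucc)ᵀ - L t.succ * (padLe P.pd t.succ)ᵀ) * Z := by
      intro k _ Z
      calc (L t.castSucc * (padLe P.pd t.castSucc)ᵀ - L t.succ * (padLe P.pd t.succ)ᵀ) * (padLe P.pd t.succ * ((padLe P.pd t.succ)ᵀ * Z))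
          = ((L t.castSucc * (padLe P.pd t.castSucc)ᵀ - L t.succ * (padLe P.pd t.succ)ᵀ) * (padLe P.pd t.succ * (padLe P.pd t.succ)ᵀ)) * Z := by
            simp only [Matrix.mul_assoc]
        _ = (L t.castSucc * (padLe P.pd t.castSucc)ᵀ - L t.succ * (padLe P.pd t.succ)ᵀ) * Z := by rw [hGE]
    have hEG : padLe P.pd t.succ * ((padLe P.pd t.succ)ᵀ * ((L t.castSucc * (padLe P.pd t.castSucc)ᵀ - L t.succ * (padLe P.pd t.succ)ᵀ))ᵀ) = ((L t.castSucc * (padLe P.pd t.castSucc)ᵀ - L t.succ * (padLe P.pd t.succ)ᵀ))ᵀ := by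
      have h' := congrArg Matrix.transpose hGE
      simp only [Matrix.transpose_mul, Matrix.transpose_transpose,
        Matrix.mul_assoc] at h'
      exact h'
    have hEEtc : padLe P.pd t.succ * ((padLe P.pd t.succ)ᵀ * (padLe P.pd t.castSucc)) = padLe P.pd t.castSucc := by
      have h' := congrArg Matrix.transpose habs_c
      simp only [Matrix.transpose_mul, Matrix.transpose_transpose,
        Matrix.mul_assoc] at h'
      exact h'
    have habs_ca : ∀ {k : Type} [Fintype k] (Z : Matrix (Idx P.pd) k ℝ),
        (padLe P.pd t.castSucc)ᵀ * (padLe P.pd t.succ * ((padLe P.pd t.succ)ᵀ * Z)) = (padLe P.pd t.castSucc)ᵀ * Z := by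
      intro k _ Z
      calc (padLe P.pd t.castSucc)ᵀ * (padLe P.pd t.succ * ((padLe P.pd t.succ)ᵀ * Z))
          = ((padLe P.pd t.castSucc)ᵀ * (padLe P.pd t.succ * (padLe P.pd t.succ)ᵀ)) * Z := by
            simp only [Matrix.mul_assoc]
        _ = (padLe P.pd t.castSucc)ᵀ * Z := by rw [habs_c]
    have hGV : (L t.castSucc * (padLe P.pd t.castSucc)ᵀ - L t.succ * (padLe P.pd t.succ)ᵀ) * P.V = (-(L t.succ * Vup P t.succ) + L t.castSucc * Vup P t.castSucc) := by
      rw [Matrix.sub_mul, Matrix.mul_assoc, ← Vup_eq, Matrix.mul_assoc, ← Vup_eq]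
      abel
    have hGVa : ∀ {k : Type} [Fintype k] (Z : Matrix (Fin P.r) k ℝ),
        (L t.castSucc * (padLe P.pd t.castSucc)ᵀ - L t.succ * (padLe P.pd t.succ)ᵀ) * (P.V * Z) = (-(L t.succ * Vup P t.succ) + L t.castSucc * Vup P t.castSucc) * Z := by
      intro k _ Z
      calc (L t.castSucc * (padLe P.pd t.castSucc)ᵀ - L t.succ * (padLe P.pd t.succ)ᵀ) * (P.V * Z) = ((L t.castSucc * (padLe P.pd t.castSucc)ᵀ - L t.succ * (padLe P.pd t.succ)ᵀ) * P.V) * Z := by rw [Matrix.mul_assoc]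
        _ = (-(L t.succ * Vup P t.succ) + L t.castSucc * Vup P t.castSucc) * Z := by rw [hGV]
    have hVG : P.Vᵀ * ((L t.castSucc * (padLe P.pd t.castSucc)ᵀ - L t.succ * (padLe P.pd t.succ)ᵀ))ᵀ = ((-(L t.succ * Vup P t.succ) + L t.castSucc * Vup P t.castSucc))ᵀ := by
      have h' := congrArg Matrix.transpose hGV
      simp only [Matrix.transpose_mul] at h'
      exact h'
    have hSS : msqrt (Phiuu P t.succ) * (msqrt (Phiuu P t.succ))ᵀ = ((padLe P.pd t.succ)ᵀ * P.V) * (((padLe P.pd t.succ)ᵀ * P.V))ᵀ := by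
      rw [msqrt_transpose, msqrt_mul_self hΦs.posSemidef]
      show Vup P t.succ * (Vup P t.succ)ᵀ = _
      rw [Vup_eq]
    have hVupT : (Vup P t.castSucc)ᵀ = P.Vᵀ * (padLe P.pd t.castSucc) := by
      rw [Vup_eq]
      simp only [Matrix.transpose_mul, Matrix.transpose_transpose]
    have hBB : ((L t.castSucc * (padLe P.pd t.castSucc)ᵀ - L t.succ * (padLe P.pd t.succ)ᵀ) * padLe P.pd t.succ * msqrt (Phiuu P t.succ)) * ((L t.castSucc * (padLe P.pd t.castSucc)ᵀ - L t.succ * (padLe P.pd t.succ)ᵀ) * padLe P.pd t.succ * msqrt (Phiuu P t.succ))ᵀ = (-(L t.succ * Vup P t.succ) + L t.castSucc * Vup P t.castSucc) * ((-(L t.succ * Vup P t.succ) + L t.castSucc * Vup P t.castSucc))ᵀ := by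
      calc ((L t.castSucc * (padLe P.pd t.castSucc)ᵀ - L t.succ * (padLe P.pd t.succ)ᵀ) * padLe P.pd t.succ * msqrt (Phiuu P t.succ)) * ((L t.castSucc * (padLe P.pd t.castSucc)ᵀ - L t.succ * (padLe P.pd t.succ)ᵀ) * padLe P.pd t.succ * msqrt (Phiuu P t.succ))ᵀ
          = (L t.castSucc * (padLe P.pd t.castSucc)ᵀ - L t.succ * (padLe P.pd t.succ)ᵀ) * (padLe P.pd t.succ * ((msqrt (Phiuu P t.succ) * (msqrt (Phiuu P t.succ))ᵀ) * ((padLe P.pd t.succ)ᵀ * ((L t.castSucc * (padLe P.pd t.castSucc)ᵀ - L t.succ * (padLe P.pd t.succ)ᵀ))ᵀ))) := by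
            simp only [Matrix.transpose_mul, Matrix.mul_assoc]
        _ = (L t.castSucc * (padLe P.pd t.castSucc)ᵀ - L t.succ * (padLe P.pd t.succ)ᵀ) * (padLe P.pd t.succ * ((padLe P.pd t.succ)ᵀ * (P.V * (P.Vᵀ * (padLe P.pd t.succ * ((padLe P.pd t.succ)ᵀ * ((L t.castSucc * (padLe P.pd t.castSucc)ᵀ - L t.succ * (padLe P.pd t.succ)ᵀ))ᵀ)))))) := by
            rw [hSS]
            simp only [Matrix.transpose_mul, Matrix.transpose_transpose, Matrix.mul_assoc]
        _ = (L t.castSucc * (padLe P.pd t.castSucc)ᵀ - L t.succ * (padLe P.pd t.succ)ᵀ) * (P.V * (P.Vᵀ * ((L t.castSucc * (padLe P.pd t.castSucc)ᵀ - L t.succ * (padLe P.pd t.succ)ᵀ))ᵀ)) := by rw [hEG, hGEa]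
        _ = (-(L t.succ * Vup P t.succ) + L t.castSucc * Vup P t.castSucc) * ((-(L t.succ * Vup P t.succ) + L t.castSucc * Vup P t.castSucc))ᵀ := by rw [hGVa, hVG]
    have hBD : ((L t.castSucc * (padLe P.pd t.castSucc)ᵀ - L t.succ * (padLe P.pd t.succ)ᵀ) * padLe P.pd t.succ * msqrt (Phiuu P t.succ)) * ((padLe P.pd t.castSucc)ᵀ * padLe P.pd t.succ * msqrt (Phiuu P t.succ))ᵀ = (-(L t.succ * Vup P t.succ) + L t.castSucc * Vup P t.castSucc) * (Vup P t.castSucc)ᵀ := by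
      calc ((L t.castSucc * (padLe P.pd t.castSucc)ᵀ - L t.succ * (padLe P.pd t.succ)ᵀ) * padLe P.pd t.succ * msqrt (Phiuu P t.succ)) * ((padLe P.pd t.castSucc)ᵀ * padLe P.pd t.succ * msqrt (Phiuu P t.succ))ᵀ
          = (L t.castSucc * (padLe P.pd t.castSucc)ᵀ - L t.succ * (padLe P.pd t.succ)ᵀ) * (padLe P.pd t.succ * ((msqrt (Phiuu P t.succ) * (msqrt (Phiuu P t.succ))ᵀ) * ((padLe P.pd t.succ)ᵀ * (padLe P.pd t.castSucc)))) := by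
            simp only [Matrix.transpose_mul, Matrix.transpose_transpose, Matrix.mul_assoc]
        _ = (L t.castSucc * (padLe P.pd t.castSucc)ᵀ - L t.succ * (padLe P.pd t.succ)ᵀ) * (padLe P.pd t.succ * ((padLe P.pd t.succ)ᵀ * (P.V * (P.Vᵀ * (padLe P.pd t.succ * ((padLe P.pd t.succ)ᵀ * (padLe P.pd t.castSucc))))))) := by
            rw [hSS]
            simp only [Matrix.transpose_mul, Matrix.transpose_transpose, Matrix.mul_assoc]
        _ = (L t.castSucc * (padLe P.pd t.castSucc)ᵀ - L t.succ * (padLe P.pd t.succ)ᵀ) * (P.V * (P.Vᵀ * (padLe P.pd t.castSucc))) := by rw [hEEtc, hGEa]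
        _ = (-(L t.succ * Vup P t.succ) + L t.castSucc * Vup P t.castSucc) * (Vup P t.castSucc)ᵀ := by
            rw [hGVa, hVupT]
    have hDD : ((padLe P.pd t.castSucc)ᵀ * padLe P.pd t.succ * msqrt (Phiuu P t.succ)) * ((padLe P.pd t.castSucc)ᵀ * padLe P.pd t.succ * msqrt (Phiuu P t.succ))ᵀ = Phiuu P t.castSucc := by
      show _ = Vup P t.castSucc * (Vup P t.castSucc)ᵀ
      calc ((padLe P.pd t.castSucc)ᵀ * padLe P.pd t.succ * msqrt (Phiuu P t.succ)) * ((padLe P.pd t.castSucc)ᵀ * padLe P.pd t.succ * msqrt (Phiuu P t.succ))ᵀ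
          = (padLe P.pd t.castSucc)ᵀ * (padLe P.pd t.succ * ((msqrt (Phiuu P t.succ) * (msqrt (Phiuu P t.succ))ᵀ) * ((padLe P.pd t.succ)ᵀ * (padLe P.pd t.castSucc)))) := by
            simp only [Matrix.transpose_mul, Matrix.transpose_transpose, Matrix.mul_assoc]
        _ = (padLe P.pd t.castSucc)ᵀ * (padLe P.pd t.succ * ((padLe P.pd t.succ)ᵀ * (P.V * (P.Vᵀ * (padLe P.pd t.succ * ((padLe P.pd t.succ)ᵀ * (padLe P.pd t.castSucc))))))) := by
            rw [hSS]
            simp only [Matrix.transpose_mul, Matrix.transpose_transpose, Matrix.mul_assoc]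
        _ = (padLe P.pd t.castSucc)ᵀ * (P.V * (P.Vᵀ * (padLe P.pd t.castSucc))) := by rw [hEEtc, habs_ca]
        _ = Vup P t.castSucc * (Vup P t.castSucc)ᵀ := by
            rw [hVupT, Vup_eq]
            simp only [Matrix.mul_assoc]
    -- complex-side hypotheses
    have hY : (mc (Y t.castSucc))ᴴ = mc (Y t.castSucc) := by
      rw [mc_conjTranspose, (hc4 t).1]
    have r1 : (AKL P K L t.succ.castSucc) * Y t.castSucc + Y t.castSucc * (AKL P K L t.succ.castSucc)ᵀ + ((L t.castSucc * (padLe P.pd t.castSucc)ᵀ - L t.succ * (padLe P.pd t.succ)ᵀ) * padLe P.pd t.succ * msqrt (Phiuu P t.succ)) * ((L t.castSucc * (padLe P.pd t.castSucc)ᵀ - L t.succ * (padLe P.pd t.succ)ᵀ) * padLe P.pd t.succ * msqrt (Phiuu P t.succ))ᵀ = 0 := by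
      rw [AKL_mid P K L t, hBB]
      exact part2
    have h1 : mc (AKL P K L t.succ.castSucc) * mc (Y t.castSucc) + mc (Y t.castSucc) * (mc (AKL P K L t.succ.castSucc))ᴴ
        + mc ((L t.castSucc * (padLe P.pd t.castSucc)ᵀ - L t.succ * (padLe P.pd t.succ)ᵀ) * padLe P.pd t.succ * msqrt (Phiuu P t.succ)) * (mc ((L t.castSucc * (padLe P.pd t.castSucc)ᵀ - L t.succ * (padLe P.pd t.succ)ᵀ) * padLe P.pd t.succ * msqrt (Phiuu P t.succ)))ᴴ = 0 := by
      rw [mc_conjTranspose, mc_conjTranspose, ← mc_mul, ← mc_mul, ← mc_mul,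
        ← mc_add, ← mc_add, r1, mc_zero]
    have r2 : Y t.castSucc * (Cup P t.castSucc)ᵀ + ((L t.castSucc * (padLe P.pd t.castSucc)ᵀ - L t.succ * (padLe P.pd t.succ)ᵀ) * padLe P.pd t.succ * msqrt (Phiuu P t.succ)) * ((padLe P.pd t.castSucc)ᵀ * padLe P.pd t.succ * msqrt (Phiuu P t.succ))ᵀ = 0 := by
      rw [hBD]
      exact part1
    have h2 : mc (Y t.castSucc) * (mc (Cup P t.castSucc))ᴴ + mc ((L t.castSucc * (padLe P.pd t.castSucc)ᵀ - L t.succ * (padLe P.pd t.succ)ᵀ) * padLe P.pd t.succ * msqrt (Phiuu P t.succ)) * (mc ((padLe P.pd t.castSucc)ᵀ * padLe P.pd t.succ * msqrt (Phiuu P t.succ)))ᴴ = 0 := by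
      rw [mc_conjTranspose, mc_conjTranspose, ← mc_mul, ← mc_mul, ← mc_add, r2, mc_zero]
    have h3 : (mc (msqrt (Phiuu P t.castSucc)))⁻¹ * (mc ((padLe P.pd t.castSucc)ᵀ * padLe P.pd t.succ * msqrt (Phiuu P t.succ)) * (mc ((padLe P.pd t.castSucc)ᵀ * padLe P.pd t.succ * msqrt (Phiuu P t.succ)))ᴴ)
        * ((mc (msqrt (Phiuu P t.castSucc)))⁻¹)ᴴ = 1 := by
      rw [mc_conjTranspose, ← mc_mul, hDD]
      exact coinner_h3 hΦc
    have hs := conj_I_omega ω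
    have hinv := isUnit_smul_one_sub_of_not_mem_spectrum hω
    show (Vmid P K L t (Complex.I * (ω:ℂ))) * (Vmid P K L t (Complex.I * (ω:ℂ)))ᴴ = 1
    simp only [Vmid]
    exact coinner _ _ _ _ _ _ _ hY h1 h2 h3 hs hinv
  · -- the last factor
    intro ω hω
    have hΦ : (Phiuu P (Fin.last N)).PosDef := phiuu_posDef P hV (Fin.last N)
    have hdet : IsUnit (Vup P (Fin.last N) * (Vup P (Fin.last N))ᵀ).det :=
      isUnit_iff_ne_zero.mpr hΦ.det_pos.ne'
    obtain ⟨part1, part2⟩ := AREd_facts hc3 hdet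
    have hY : (mc (Y (Fin.last N)))ᴴ = mc (Y (Fin.last N)) := by
      rw [mc_conjTranspose, hc3.1]
    have r1 : (AKL P K L (Fin.last (N+1))) * Y (Fin.last N)
        + Y (Fin.last N) * (AKL P K L (Fin.last (N+1)))ᵀ
        + (P.W + L (Fin.last N) * Vup P (Fin.last N))
          * (P.W + L (Fin.last N) * Vup P (Fin.last N))ᵀ = 0 := by
      rw [AKL_last P K L]
      exact part2
    have h1 : mc (AKL P K L (Fin.last (N+1))) * mc (Y (Fin.last N))
        + mc (Y (Fin.last N)) * (mc (AKL P K L (Fin.last (N+1))))ᴴ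
        + mc (P.W + L (Fin.last N) * Vup P (Fin.last N))
          * (mc (P.W + L (Fin.last N) * Vup P (Fin.last N)))ᴴ = 0 := by
      rw [mc_conjTranspose, mc_conjTranspose, ← mc_mul, ← mc_mul, ← mc_mul,
        ← mc_add, ← mc_add, r1, mc_zero]
    have h2 : mc (Y (Fin.last N)) * (mc (Cup P (Fin.last N)))ᴴ
        + mc (P.W + L (Fin.last N) * Vup P (Fin.last N))
          * (mc (Vup P (Fin.last N)))ᴴ = 0 := by
      rw [mc_conjTranspose, mc_conjTranspose, ← mc_mul, ← mc_mul, ← mc_add, part1, mc_zero]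
    have h3 : (mc (msqrt (Phiuu P (Fin.last N))))⁻¹
        * (mc (Vup P (Fin.last N)) * (mc (Vup P (Fin.last N)))ᴴ)
        * ((mc (msqrt (Phiuu P (Fin.last N))))⁻¹)ᴴ = 1 := by
      rw [mc_conjTranspose, ← mc_mul]
      exact coinner_h3 hΦ
    have hs := conj_I_omega ω
    have hinv := isUnit_smul_one_sub_of_not_mem_spectrum hω
    show (Vlast P K L (Complex.I * (ω:ℂ))) * (Vlast P K L (Complex.I * (ω:ℂ)))ᴴ = 1
    simp only [Vlast]
    exact coinner _ _ _ _ _ _ _ hY h1 h2 h3 hs hinv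

end TriLQG
end
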